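/- Let P ∈ ℤ[X] be a monic polynomial of degree 2d (d ≥ 1) such that every complex root z of P is non-real and satisfies |z| = sqrt(q). Then the coefficients of P satisfy the functional equation P.coeff(m) = q^(d−m) · P.coeff(2d−m) for every m with 0 ≤ m ≤ d; equivalently, X^(2d) · P(q/X) = q^d · P(X) as rational functions. In particular q^j divides the coefficient of X^(d−j) for 1 ≤ j ≤ d. -/

import Mathlib

open Polynomial Complex Multiset

/-- Let `P ∈ ℤ[X]` be monic of degree `2d` (`d ≥ 1`) such that every complex root `z` of `P`
is non-real and satisfies `|z| = √q` (with `q = p ^ r`, `p` prime, `r ≥ 1`).  Then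
`P.coeff m = q ^ (d - m) * P.coeff (2d - m)` for all `0 ≤ m ≤ d`; in particular
`q ^ j` divides the coefficient of `X ^ (d - j)` for `1 ≤ j ≤ d`. -/
theorem stmt_2 (p r : ℕ) (hp : p.Prime) (hr : 1 ≤ r) (q : ℕ) (hq : q = p ^ r)
    (d : ℕ) (hd : 1 ≤ d) (P : Polynomial ℤ) (hmonic : P.Monic) (hdeg : P.natDegree = 2 * d)
    (hroots : ∀ z : ℂ, Polynomial.aeval z P = 0 →
      z.im ≠ 0 ∧ ‖z‖ = Real.sqrt q) :
    (∀ m : ℕ, m ≤ d → P.coeff m = (q : ℤ) ^ (d - m) * P.coeff (2 * d - m)) ∧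
    (∀ j : ℕ, 1 ≤ j → j ≤ d → (q : ℤ) ^ j ∣ P.coeff (d - j)) := by
  have hq0 : 0 < q := by subst hq; exact pow_pos hp.pos r
  have hqR : (0:ℝ) < q := by exact_mod_cast hq0
  set f : ℤ →+* ℂ := Int.castRingHom ℂ with hf
  set Pc : Polynomial ℂ := P.map f with hPc
  have hPc_monic : Pc.Monic := hmonic.map f
  have hPcdeg : Pc.natDegree = 2 * d := by
    rw [hPc, hmonic.natDegree_map]; exact hdeg
  set R : Multiset ℂ := Pc.roots with hRdef
  have hsplits : Pc.Splits := IsAlgClosed.splits Pc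
  have hcard : Multiset.card R = 2 * d := by
    rw [hRdef, splits_iff_card_roots.mp hsplits, hPcdeg]
  have hPne : Pc ≠ 0 := hPc_monic.ne_zero
  have hmem : ∀ z ∈ R, z.im ≠ 0 ∧ ‖z‖ = Real.sqrt q := by
    intro z hz
    apply hroots
    have := (mem_roots hPne).mp hz
    rw [aeval_def, ← eval_map]
    exact this
  have hz0 : ∀ z ∈ R, z ≠ 0 := by
    intro z hz h0
    have h1 := (hmem z hz).2
    rw [h0] at h1
    rw [norm_zero] at h1
    have h2 := Real.sqrt_pos.mpr hqR
    linarith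
  -- conjugation stability
  have hRconj : R.map (starRingEnd ℂ) = R := by
    have h1 : Pc.map (starRingEnd ℂ) = Pc := by
      rw [hPc, Polynomial.map_map]
      congr 1
      exact Subsingleton.elim _ _
    conv_rhs => rw [hRdef, ← h1]
    rw [hsplits.roots_map]
  -- conj z = q / z on roots
  have hconj : ∀ z ∈ R, (starRingEnd ℂ) z = (q : ℂ) / z := by
    intro z hz
    have habs := (hmem z hz).2
    have hns : Complex.normSq z = (q : ℝ) := by
      rw [← Complex.sq_norm, habs, Real.sq_sqrt hqR.le]
    have : z * (starRingEnd ℂ) z = (q : ℂ) := by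
      rw [Complex.mul_conj, hns]; simp
    field_simp [hz0 z hz] at this ⊢
    linear_combination this
  have hRinv : R.map (fun z => (q : ℂ) / z) = R := by
    rw [← Multiset.map_congr rfl hconj, hRconj]
  -- product of roots is q^d
  have habsprod : ‖R.prod‖ = (q : ℝ) ^ d := by
    have h1 : ‖R.prod‖ = (R.map (fun z => ‖z‖)).prod := by
      simpa using (normHom : ℂ →*₀ ℝ).toMonoidHom.map_multiset_prod R
    have h2 : R.map (fun z => ‖z‖) = R.map (fun _ => Real.sqrt q) :=
      Multiset.map_congr rfl (fun z hz => (hmem z hz).2)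
    rw [h1, h2, Multiset.map_const', Multiset.prod_replicate, hcard,
      pow_mul, Real.sq_sqrt hqR.le]
  -- the product of the roots is a nonnegative real number
  classical
  have hprodreal : ∃ w : ℂ, R.prod = (Complex.normSq w : ℂ) := by
    refine ⟨(R.filter (fun z => 0 < z.im)).prod, ?_⟩
    have hsplit : R.filter (fun z => 0 < z.im) + R.filter (fun z => ¬ 0 < z.im) = R :=
      Multiset.filter_add_not _ _
    have hneg : R.filter (fun z => ¬ 0 < z.im)
        = (R.filter (fun z => 0 < z.im)).map (starRingEnd ℂ) := by
      conv_lhs => rw [← hRconj]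
      rw [Multiset.filter_map]
      congr 1
      apply Multiset.filter_congr
      intro z hz
      have him := (hmem z hz).1
      simp only [Function.comp_apply, Complex.conj_im]
      constructor
      · intro h; rcases lt_or_gt_of_ne him with h'|h'
        · exact absurd (by linarith : (0:ℝ) < -z.im) h
        · exact h'
      · intro h; intro h2; linarith
    have hconjprod : ((R.filter (fun z => 0 < z.im)).map (starRingEnd ℂ)).prod
        = (starRingEnd ℂ) (R.filter (fun z => 0 < z.im)).prod := by
      rw [← map_multiset_prod]
    have hw : R.prod = (R.filter (fun z => 0 < z.im)).prod
        * (starRingEnd ℂ) (R.filter (fun z => 0 < z.im)).prod := by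
      conv_lhs => rw [← hsplit]
      rw [Multiset.prod_add, hneg, hconjprod]
    rw [hw, Complex.mul_conj]
  have hprod : R.prod = ((q : ℂ)) ^ d := by
    obtain ⟨w, hw⟩ := hprodreal
    have h2 : (Complex.normSq w : ℝ) = (q:ℝ)^d := by
      have h1 : ‖((Complex.normSq w : ℝ) : ℂ)‖ = Complex.normSq w := by
        rw [Complex.norm_real, Real.norm_of_nonneg (Complex.normSq_nonneg w)]
      rw [← h1, ← hw, habsprod]
    rw [hw, h2]
    push_cast
    ring
  -- product formula for Pc
  have hPc_prod : (R.map (fun z => X - C z)).prod = Pc :=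
    prod_multiset_X_sub_C_of_monic_of_roots_card_eq hPc_monic (by rw [← hRdef, hcard, hPcdeg])
  -- the auxiliary polynomials
  set A : Polynomial ℂ := ∑ k ∈ Finset.range (2*d+1),
      C ((P.coeff k : ℂ) * (q:ℂ)^k) * X^(2*d-k) with hAdef
  set Q : Polynomial ℂ := (R.map (fun z => C (q:ℂ) - C z * X)).prod with hQdef
  -- Q = q^d • Pc
  have hQ : Q = C ((q:ℂ)^d) * Pc := by
    have step : R.map (fun z => C (q:ℂ) - C z * X)
        = R.map (fun z => C (-z) * (X - C ((q:ℂ)/z))) := by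
      apply Multiset.map_congr rfl
      intro z hz
      have hzne := hz0 z hz
      have hqz : C ((q:ℂ)/z) * C z = C (q:ℂ) := by
        rw [← C_mul, div_mul_cancel₀ _ hzne]
      rw [map_neg]
      linear_combination -hqz
    rw [hQdef, step, Multiset.prod_map_mul]
    congr 1
    · have h1 : (R.map fun z => C (-z)) = (R.map Neg.neg).map C := by
        rw [Multiset.map_map]; rfl
      rw [h1, ← map_multiset_prod, Multiset.prod_map_neg, hcard,
        Even.neg_one_pow (even_two_mul d), one_mul, hprod]
    · have h2 : R.map (fun z => X - C ((q:ℂ)/z))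
          = (R.map (fun z => (q:ℂ)/z)).map (fun w => X - C w) := by
        rw [Multiset.map_map]; rfl
      rw [h2, hRinv, hPc_prod]
  -- A = Q by evaluating away from 0
  have hx2d : ∀ x : ℂ, x ≠ 0 → Polynomial.eval x A = Polynomial.eval x Q := by
    intro x hx
    have hevalQ : Polynomial.eval x Q = (R.map (fun z => (q:ℂ) - z * x)).prod := by
      rw [hQdef, Polynomial.eval_multiset_prod, Multiset.map_map]
      congr 1
      apply Multiset.map_congr rfl
      intro z _
      simp only [Function.comp_apply, Polynomial.eval_sub, Polynomial.eval_mul,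
        Polynomial.eval_C, Polynomial.eval_X]
    have hevalPc : Polynomial.eval ((q:ℂ)/x) Pc = (R.map (fun z => (q:ℂ)/x - z)).prod := by
      rw [← hPc_prod, Polynomial.eval_multiset_prod, Multiset.map_map]
      congr 1
      apply Multiset.map_congr rfl
      intro z _
      simp only [Function.comp_apply, Polynomial.eval_sub, Polynomial.eval_C, Polynomial.eval_X]
    have key : (R.map (fun z => (q:ℂ) - z * x)).prod
        = x^(2*d) * Polynomial.eval ((q:ℂ)/x) Pc := by
      rw [hevalPc]
      have h3 : R.map (fun z => (q:ℂ) - z * x) = R.map (fun z => x * ((q:ℂ)/x - z)) := by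
        apply Multiset.map_congr rfl
        intro z _
        field_simp
      rw [h3, Multiset.prod_map_mul, Multiset.map_const', Multiset.prod_replicate, hcard]
    have hevalA : Polynomial.eval x A = x^(2*d) * Polynomial.eval ((q:ℂ)/x) Pc := by
      rw [hAdef, Polynomial.eval_finset_sum,
        Polynomial.eval_eq_sum_range' (n := 2*d+1) (by omega : Pc.natDegree < 2*d+1),
        Finset.mul_sum]
      apply Finset.sum_congr rfl
      intro k hk
      have hk' : k ≤ 2*d := by
        have := Finset.mem_range.mp hk; omega
      rw [Polynomial.eval_mul, Polynomial.eval_C, Polynomial.eval_pow, Polynomial.eval_X,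
        Polynomial.coeff_map, pow_sub₀ x hx hk', div_pow]
      field_simp
      rw [hf, eq_intCast]; ring
    rw [hevalA, hevalQ, key]
  have hAQ : A = Q := by
    apply Polynomial.eq_of_infinite_eval_eq
    apply Set.Infinite.mono (s := {(0:ℂ)}ᶜ)
    · intro x hx
      exact hx2d x hx
    · exact (Set.finite_singleton (0:ℂ)).infinite_compl
  -- extract coefficients
  have key : ∀ m : ℕ, m ≤ 2*d →
      (P.coeff (2*d-m) : ℂ) * (q:ℂ)^(2*d-m) = (q:ℂ)^d * (P.coeff m : ℂ) := by
    intro m hm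
    have hcoeffA : A.coeff m = (P.coeff (2*d-m) : ℂ) * (q:ℂ)^(2*d-m) := by
      rw [hAdef, Polynomial.finset_sum_coeff]
      rw [Finset.sum_eq_single (2*d - m)]
      · rw [Polynomial.coeff_C_mul, Polynomial.coeff_X_pow, if_pos (by omega), mul_one]
      · intro k hk hkne
        have hk' := Finset.mem_range.mp hk
        rw [Polynomial.coeff_C_mul, Polynomial.coeff_X_pow, if_neg (by omega), mul_zero]
      · intro h
        exact absurd (Finset.mem_range.mpr (by omega)) h
    have hcoeffQ : Q.coeff m = (q:ℂ)^d * (P.coeff m : ℂ) := by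
      rw [hQ, Polynomial.coeff_C_mul, hPc, Polynomial.coeff_map]
      rfl
    rw [← hcoeffA, ← hcoeffQ, hAQ]
  have hqC : (q:ℂ) ≠ 0 := by
    exact_mod_cast hq0.ne'
  have main : ∀ m : ℕ, m ≤ d → P.coeff m = (q : ℤ) ^ (d - m) * P.coeff (2 * d - m) := by
    intro m hm
    have h1 := key m (by omega)
    have h2 : (q:ℂ)^(2*d-m) = (q:ℂ)^d * (q:ℂ)^(d-m) := by
      rw [← pow_add]
      congr 1
      omega
    have h3 : (P.coeff m : ℂ) = (q:ℂ)^(d-m) * (P.coeff (2*d-m) : ℂ) := by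
      apply mul_left_cancel₀ (pow_ne_zero d hqC)
      rw [← h1, h2]
      ring
    have : (P.coeff m : ℂ) = ((q:ℤ)^(d-m) * P.coeff (2*d-m) : ℤ) := by
      push_cast
      linear_combination h3
    exact_mod_cast this
  refine ⟨main, ?_⟩
  intro j hj1 hjd
  have := main (d - j) (by omega)
  rw [this]
  have hdj : d - (d - j) = j := by omega
  rw [hdj]
  exact Dvd.intro _ rfl
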